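/- Let M be a finite MDP with alarm region, let x_0 ∉ X_a be the initial state, and let Δ ∈ [0,1]. Then the supremum of J_M(π) over all history-dependent policies π of M satisfying P^π(∃ t ∈ {0,…,T}: X_t ∈ X_a) ≤ Δ equals the supremum of Ĵ(π̂) over all history-dependent policies π̂ of the binary augmented MDP M̂ satisfying P^π̂(Y_T = 1) ≤ Δ. -/

import Mathlib

/- Common framework: finite MDPs with alarm region, trajectories,
   history-dependent policies, trajectory laws, objectives. -/

attribute [local instance] Classical.propDecidable

noncomputable section

/-- A finite MDP with alarm region `Xa`, horizon `T ≥ 1`, transition pmf `P`,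
running rewards `r` and terminal reward `rT`. -/
structure MDP (X A : Type) [Fintype X] [Fintype A] where
  T : ℕ
  hT : 1 ≤ T
  P : X → A → X → ℝ
  P_nonneg : ∀ x a x', 0 ≤ P x a x'
  P_sum : ∀ x a, ∑ x', P x a x' = 1
  r : Fin T → X → A → ℝ
  rT : X → ℝ
  Xa : Set X

variable {X A : Type} [Fintype X] [Fintype A]

/-- A trajectory `(x₀,…,x_T, a₀,…,a_{T-1})`. -/
abbrev Traj (M : MDP X A) := (Fin (M.T + 1) → X) × (Fin M.T → A)

/-- A history-dependent randomized policy: at each time `t < T` it maps the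
history `(x₀,…,x_t, a₀,…,a_{t-1})` to a pmf on actions. -/
structure HistPolicy (M : MDP X A) where
  π : (t : Fin M.T) → (Fin (t.val + 1) → X) → (Fin t.val → A) → A → ℝ
  nonneg : ∀ t xs as a, 0 ≤ π t xs as a
  sum_one : ∀ t xs as, ∑ a, π t xs as a = 1

/-- A policy is Markov if at each time it depends only on the current state. -/
def IsMarkov {M : MDP X A} (p : HistPolicy M) : Prop :=
  ∀ (t : Fin M.T) (xs xs' : Fin (t.val + 1) → X) (as as' : Fin t.val → A),
    xs (Fin.last t.val) = xs' (Fin.last t.val) → p.π t xs as = p.π t xs' as'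

/-- The state part of the history at time `t` determined by a trajectory. -/
def histStates {M : MDP X A} (τ : Traj M) (t : Fin M.T) : Fin (t.val + 1) → X :=
  fun i => τ.1 (Fin.castLE (by have := t.isLt; omega) i)

/-- The action part of the history at time `t` determined by a trajectory. -/
def histActs {M : MDP X A} (τ : Traj M) (t : Fin M.T) : Fin t.val → A :=
  fun i => τ.2 (Fin.castLE (by have := t.isLt; omega) i)

/-- The probability mass of a trajectory under policy `p` with initial state `x0`. -/
def trajProb (M : MDP X A) (p : HistPolicy M) (x0 : X) (τ : Traj M) : ℝ :=
  (if τ.1 0 = x0 then (1 : ℝ) else 0) *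
    ∏ t : Fin M.T,
      p.π t (histStates τ t) (histActs τ t) (τ.2 t) *
        M.P (τ.1 t.castSucc) (τ.2 t) (τ.1 t.succ)

/-- Probability of an event (a set of trajectories) under the trajectory law. -/
def probEvent (M : MDP X A) (p : HistPolicy M) (x0 : X) (E : Traj M → Prop) : ℝ :=
  ∑ τ : Traj M, if E τ then trajProb M p x0 τ else 0

/-- The objective `J_M(π) = E[Σ_t r_t(X_t,A_t) + r_T(X_T)]`. -/
def J (M : MDP X A) (p : HistPolicy M) (x0 : X) : ℝ :=
  ∑ τ : Traj M, trajProb M p x0 τ *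
    (∑ t : Fin M.T, M.r t (τ.1 t.castSucc) (τ.2 t) + M.rT (τ.1 (Fin.last M.T)))

/-- The binary augmented MDP: the extra `Bool` state records whether an alarm
has been triggered so far. -/
def binAug (M : MDP X A) : MDP (X × Bool) A where
  T := M.T
  hT := M.hT
  P := fun s a s' =>
    if s'.2 = (s.2 || decide (s'.1 ∈ M.Xa)) then M.P s.1 a s'.1 else 0
  P_nonneg := by
    intro s a s'
    try dsimp only
    split
    · exact M.P_nonneg s.1 a s'.1
    · exact le_refl 0
  P_sum := by
    intro s a
    rw [Fintype.sum_prod_type]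
    have h : ∀ x' : X,
        (∑ y : Bool, if y = (s.2 || decide (x' ∈ M.Xa)) then M.P s.1 a x' else 0)
          = M.P s.1 a x' := by
      intro x'; simp
    rw [Finset.sum_congr rfl fun x' _ => h x']
    exact M.P_sum s.1 a
  r := fun t s a => M.r t s.1 a
  rT := fun s => M.rT s.1
  Xa := {s | s.1 ∈ M.Xa}


/-- Alarm flag determined by a state history: true iff some state at a
positive time so far is in the alarm region. -/
def flagF (M : MDP X A) {n : ℕ} (xs : Fin n → X) (i : Fin n) : Bool :=
  decide (∃ j : Fin n, 0 < j.val ∧ j.val ≤ i.val ∧ xs j ∈ M.Xa)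

lemma flagF_castLE (M : MDP X A) {m n : ℕ} (h : m ≤ n) (xs : Fin n → X) (i : Fin m) :
    flagF M (fun j => xs (Fin.castLE h j)) i = flagF M xs (Fin.castLE h i) := by
  unfold flagF
  apply decide_eq_decide.mpr
  constructor
  · rintro ⟨j, h1, h2, h3⟩
    exact ⟨Fin.castLE h j, h1, h2, h3⟩
  · rintro ⟨j, h1, h2, h3⟩
    have h2' : j.val ≤ i.val := by simpa using h2
    have hjm : j.val < m := lt_of_le_of_lt h2' i.isLt
    refine ⟨⟨j.val, hjm⟩, h1, by simpa using h2', ?_⟩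
    have heq : Fin.castLE h ⟨j.val, hjm⟩ = j := by
      apply Fin.ext; rfl
    show xs (Fin.castLE h ⟨j.val, hjm⟩) ∈ M.Xa
    rw [heq]; exact h3

lemma flagF_zero (M : MDP X A) {n : ℕ} (xs : Fin n → X) (i : Fin n) (hi : i.val = 0) :
    flagF M xs i = false := by
  unfold flagF
  apply decide_eq_false
  rintro ⟨j, h1, h2, _⟩; omega

lemma flagF_succ (M : MDP X A) {n : ℕ} (xs : Fin (n+1) → X) (i : Fin n) :
    flagF M xs i.succ = (flagF M xs i.castSucc || decide (xs i.succ ∈ M.Xa)) := by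
  unfold flagF
  rw [← Bool.decide_or]
  apply decide_eq_decide.mpr
  constructor
  · rintro ⟨j, h1, h2, h3⟩
    rcases eq_or_lt_of_le h2 with he | hl
    · right
      have : j = i.succ := Fin.ext (by simpa using he)
      rwa [this] at h3
    · left
      exact ⟨j, h1, by simp [Fin.val_succ] at hl ⊢; omega, h3⟩
  · rintro (⟨j, h1, h2, h3⟩ | h)
    · exact ⟨j, h1, by simp [Fin.val_succ] at h2 ⊢; omega, h3⟩
    · exact ⟨i.succ, by simp [Fin.val_succ], le_refl _, h⟩

lemma flagF_last (M : MDP X A) {n : ℕ} (xs : Fin (n+1) → X) :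
    flagF M xs (Fin.last n) = true ↔ ∃ j, 0 < j.val ∧ xs j ∈ M.Xa := by
  unfold flagF
  rw [decide_eq_true_iff]
  constructor
  · rintro ⟨j, h1, _, h3⟩; exact ⟨j, h1, h3⟩
  · rintro ⟨j, h1, h2⟩
    exact ⟨j, h1, by have := j.isLt; simp [Fin.last]; omega, h2⟩

/-- Lift a trajectory of `M` to a trajectory of `binAug M` by attaching flags. -/
def liftT (M : MDP X A) (τ : Traj M) : Traj (binAug M) :=
  (fun i => (τ.1 i, flagF M τ.1 i), τ.2)

lemma liftT_injective (M : MDP X A) : Function.Injective (liftT M) := by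
  intro τ τ' h
  have h1 : τ.1 = τ'.1 := by
    funext i
    have := congrArg (fun σ : Traj (binAug M) => (σ.1 i).1) h
    simpa [liftT] using this
  have h2 : τ.2 = τ'.2 := congrArg (fun σ : Traj (binAug M) => σ.2) h
  exact Prod.ext h1 h2

/-- A policy of `M` and a policy of `binAug M` agree if the latter, fed with
flag-augmented histories, gives the former. -/
def Agrees (M : MDP X A) (p : HistPolicy M) (q : HistPolicy (binAug M)) : Prop :=
  ∀ (t : Fin M.T) (xs : Fin (t.val + 1) → X) (as : Fin t.val → A),
    q.π t (fun i => (xs i, flagF M xs i)) as = p.π t xs as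

lemma histStates_liftT (M : MDP X A) (τ : Traj M) (t : Fin (binAug M).T) :
    histStates (liftT M τ) t
      = fun i => (histStates τ t i, flagF M (histStates τ t) i) := by
  funext i
  show ((liftT M τ).1 _ ) = _
  apply Prod.ext
  · rfl
  · show flagF M τ.1 (Fin.castLE _ i) = flagF M (histStates τ t) i
    have ht : t.val < M.T := t.isLt
    rw [← flagF_castLE M (by omega) τ.1 i]
    rfl

lemma trajProb_liftT (M : MDP X A) (p : HistPolicy M) (q : HistPolicy (binAug M))
    (hpq : Agrees M p q) (x0 : X) (τ : Traj M) :
    trajProb (binAug M) q (x0, false) (liftT M τ) = trajProb M p x0 τ := by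
  unfold trajProb
  congr 1
  · have h0 : (liftT M τ).1 0 = (τ.1 0, false) := by
      show (τ.1 0, flagF M τ.1 0) = _
      rw [flagF_zero M τ.1 0 rfl]
    rw [h0]
    by_cases h : τ.1 0 = x0 <;> simp [h]
  · apply Finset.prod_congr rfl
    intro t _
    congr 1
    · rw [histStates_liftT]
      exact congrFun (hpq t (histStates τ t) (histActs τ t)) (τ.2 t)
    · show (binAug M).P (τ.1 t.castSucc, flagF M τ.1 t.castSucc) (τ.2 t)
        (τ.1 t.succ, flagF M τ.1 t.succ) = M.P (τ.1 t.castSucc) (τ.2 t) (τ.1 t.succ)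
      show (if flagF M τ.1 t.succ
          = (flagF M τ.1 t.castSucc || decide (τ.1 t.succ ∈ M.Xa)) then
          M.P (τ.1 t.castSucc) (τ.2 t) (τ.1 t.succ) else 0) = _
      exact if_pos (flagF_succ M τ.1 t)

lemma trajProb_eq_zero_of_not_lift (M : MDP X A) (q : HistPolicy (binAug M))
    (x0 : X) (σ : Traj (binAug M)) (hσ : ∀ τ : Traj M, σ ≠ liftT M τ) :
    trajProb (binAug M) q (x0, false) σ = 0 := by
  by_contra hne
  apply hσ (fun i => (σ.1 i).1, σ.2)
  unfold trajProb at hne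
  have hind : σ.1 0 = (x0, false) := by
    by_contra h
    rw [if_neg h, zero_mul] at hne
    exact hne rfl
  have hprod : ∀ t : Fin (binAug M).T,
      q.π t (histStates σ t) (histActs σ t) (σ.2 t) *
        (binAug M).P (σ.1 t.castSucc) (σ.2 t) (σ.1 t.succ) ≠ 0 := by
    intro t
    intro h
    apply hne
    rw [Finset.prod_eq_zero (Finset.mem_univ t) h, mul_zero]
  have hstep : ∀ t : Fin (binAug M).T,
      (σ.1 t.succ).2 = ((σ.1 t.castSucc).2 || decide ((σ.1 t.succ).1 ∈ M.Xa)) := by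
    intro t
    by_contra h
    apply hprod t
    show q.π t (histStates σ t) (histActs σ t) (σ.2 t) *
      (if (σ.1 t.succ).2 = ((σ.1 t.castSucc).2 || decide ((σ.1 t.succ).1 ∈ M.Xa))
        then M.P (σ.1 t.castSucc).1 (σ.2 t) (σ.1 t.succ).1 else 0) = 0
    rw [if_neg h, mul_zero]
  have hcons : ∀ i : Fin ((binAug M).T + 1),
      (σ.1 i).2 = flagF M (fun j => (σ.1 j).1) i := by
    intro i
    induction i using Fin.induction with
    | zero =>
        rw [flagF_zero M _ 0 rfl, hind]
    | succ t ih =>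
        rw [hstep t, ih, flagF_succ]
  apply Prod.ext
  · funext i
    exact Prod.ext rfl (hcons i)
  · rfl

lemma sum_eq_sum_liftT (M : MDP X A) (g : Traj (binAug M) → ℝ)
    (h0 : ∀ σ, (∀ τ : Traj M, σ ≠ liftT M τ) → g σ = 0) :
    ∑ σ : Traj (binAug M), g σ = ∑ τ : Traj M, g (liftT M τ) := by
  have himg : ∑ σ ∈ Finset.univ.image (liftT M), g σ = ∑ τ : Traj M, g (liftT M τ) :=
    Finset.sum_image (fun x _ y _ h => liftT_injective M h)
  rw [← himg]
  apply (Finset.sum_subset (Finset.subset_univ _) ?_).symm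
  intro σ _ hσ
  apply h0
  intro τ hτ
  apply hσ
  rw [Finset.mem_image]
  exact ⟨τ, Finset.mem_univ τ, hτ.symm⟩

lemma event_liftT (M : MDP X A) (x0 : X) (hx0 : x0 ∉ M.Xa) (τ : Traj M)
    (h : τ.1 0 = x0) :
    (((liftT M τ).1 (Fin.last (binAug M).T)).2 = true) ↔ ∃ t, τ.1 t ∈ M.Xa := by
  show flagF M τ.1 (Fin.last M.T) = true ↔ _
  rw [flagF_last]
  constructor
  · rintro ⟨j, _, hj⟩; exact ⟨j, hj⟩
  · rintro ⟨t, ht⟩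
    refine ⟨t, ?_, ht⟩
    by_contra hz
    have : t = 0 := Fin.ext (by simp only [Fin.val_zero]; omega)
    rw [this, h] at ht
    exact hx0 ht

lemma probEvent_agrees (M : MDP X A) (p : HistPolicy M) (q : HistPolicy (binAug M))
    (hpq : Agrees M p q) (x0 : X) (hx0 : x0 ∉ M.Xa) :
    probEvent (binAug M) q (x0, false)
        (fun σ => (σ.1 (Fin.last (binAug M).T)).2 = true)
      = probEvent M p x0 (fun τ => ∃ t, τ.1 t ∈ M.Xa) := by
  unfold probEvent
  rw [sum_eq_sum_liftT M _ (fun σ hσ => by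
    rw [trajProb_eq_zero_of_not_lift M q x0 σ hσ]; simp)]
  apply Finset.sum_congr rfl
  intro τ _
  rw [trajProb_liftT M p q hpq x0 τ]
  by_cases h : τ.1 0 = x0
  · by_cases hE : ∃ t, τ.1 t ∈ M.Xa
    · rw [if_pos ((event_liftT M x0 hx0 τ h).mpr hE), if_pos hE]
    · rw [if_neg (fun hc => hE ((event_liftT M x0 hx0 τ h).mp hc)), if_neg hE]
  · have hz : trajProb M p x0 τ = 0 := by
      unfold trajProb; rw [if_neg h, zero_mul]
    rw [hz]
    simp

lemma J_agrees (M : MDP X A) (p : HistPolicy M) (q : HistPolicy (binAug M))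
    (hpq : Agrees M p q) (x0 : X) :
    J (binAug M) q (x0, false) = J M p x0 := by
  unfold J
  rw [sum_eq_sum_liftT M _ (fun σ hσ => by
    rw [trajProb_eq_zero_of_not_lift M q x0 σ hσ, zero_mul])]
  apply Finset.sum_congr rfl
  intro τ _
  rw [trajProb_liftT M p q hpq x0 τ]
  rfl

/-- The optimal attack impact over history-dependent policies
under the temporally joint chance constraint equals the optimal impact over
history-dependent policies of the binary augmented MDP under the final-flag
constraint. -/
theorem impact_hist_eq_binAug_hist [Nonempty X] [Nonempty A]
    (M : MDP X A) (x0 : X) (hx0 : x0 ∉ M.Xa) (Δ : ℝ) (hΔ : Δ ∈ Set.Icc (0 : ℝ) 1) :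
    sSup {v : ℝ | ∃ p : HistPolicy M,
        probEvent M p x0 (fun τ => ∃ t, τ.1 t ∈ M.Xa) ≤ Δ ∧ v = J M p x0} =
    sSup {v : ℝ | ∃ q : HistPolicy (binAug M),
        probEvent (binAug M) q (x0, false)
          (fun σ => (σ.1 (Fin.last (binAug M).T)).2 = true) ≤ Δ ∧
        v = J (binAug M) q (x0, false)} := by
  congr 1
  apply Set.ext
  intro v
  constructor
  · rintro ⟨p, hc, hv⟩
    refine ⟨⟨fun t xs as a => p.π t (fun i => (xs i).1) as a,
      fun t xs as a => p.nonneg t _ as a, fun t xs as => p.sum_one t _ as⟩, ?_, ?_⟩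
    · rw [probEvent_agrees M p _ (fun t xs as => rfl) x0 hx0]
      exact hc
    · rw [hv, J_agrees M p _ (fun t xs as => rfl) x0]
  · rintro ⟨q, hc, hv⟩
    refine ⟨⟨fun t xs as a => q.π t (fun i => (xs i, flagF M xs i)) as a,
      fun t xs as a => q.nonneg t _ as a, fun t xs as => q.sum_one t _ as⟩, ?_, ?_⟩
    · rw [← probEvent_agrees M _ q (fun t xs as => rfl) x0 hx0]
      exact hc
    · rw [hv, ← J_agrees M _ q (fun t xs as => rfl) x0]

end
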